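/- Let N > 0, and let φ₁, φ₂, ε₁, ε₂ be real numbers with 0 < φ₁ < 1, 0 < ε₁ < φ₁, 0 < ε₂ < φ₂ < 1. Set β = 1/(ε₂·φ₁), γ = (ε₂ + φ₂)/(ε₂·φ₁), k₁ = max{1/ε₁, γ + √(β·γ)}, k₂ = β·k₁/(k₁ − γ). Let f_x, f̂_x, f_xy, f̂_xy be real numbers with f_x ≤ f̂_x ≤ f_x + N/k₁ and f_xy ≤ f̂_xy ≤ f_xy + N/k₂ (the Space Saving guarantees for the two summaries). If f̂_x > φ₁·N and f̂_xy > φ₂·(f̂_x − N/k₁) (the tuple (x,y) is reported by CSSCHH as a correlated heavy hitter candidate), then f_x > (φ₁ − ε₁)·N and f_xy > (φ₂ − ε₂)·f_x. (This is the overall correctness of CSSCHH for the Approximate Correlated Heavy Hitters problem: with the counter counts chosen at initialization, no reported primary candidate violates the ε₁ tolerance and no reported correlated candidate violates the ε₂ tolerance.) -/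

import Mathlib

theorem cs_overall_correctness
    (N φ₁ φ₂ ε₁ ε₂ : ℝ)
    (hN : 0 < N)
    (hφ₁ : 0 < φ₁) (hφ₁' : φ₁ < 1)
    (hε₁ : 0 < ε₁) (hε₁φ₁ : ε₁ < φ₁)
    (hε₂ : 0 < ε₂) (hε₂φ₂ : ε₂ < φ₂) (hφ₂' : φ₂ < 1) :
    let β := 1 / (ε₂ * φ₁)
    let γ := (ε₂ + φ₂) / (ε₂ * φ₁)
    let k₁ := max (1 / ε₁) (γ + Real.sqrt (β * γ))
    let k₂ := β * k₁ / (k₁ - γ)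
    ∀ fx fxhat fxy fxyhat : ℝ,
      fx ≤ fxhat → fxhat ≤ fx + N / k₁ →
      fxy ≤ fxyhat → fxyhat ≤ fxy + N / k₂ →
      fxhat > φ₁ * N → fxyhat > φ₂ * (fxhat - N / k₁) →
      fx > (φ₁ - ε₁) * N ∧ fxy > (φ₂ - ε₂) * fx := by
  intro β γ k₁ k₂ fx fxhat fxy fxyhat h1 h2 h3 h4 h5 h6
  have hεφ : 0 < ε₂ * φ₁ := mul_pos hε₂ hφ₁
  have hβ : 0 < β := by positivity
  have hφ₂ : 0 < φ₂ := hε₂.trans hε₂φ₂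
  have hγ : 0 < γ := by
    have : 0 < ε₂ + φ₂ := by linarith
    exact div_pos this hεφ
  have hsq : 0 < Real.sqrt (β * γ) := Real.sqrt_pos.mpr (mul_pos hβ hγ)
  have hk₁γ : γ < k₁ := lt_of_lt_of_le (by linarith) (le_max_right _ _)
  have hk₁ : 0 < k₁ := hγ.trans hk₁γ
  have hk₁ε : 1 / ε₁ ≤ k₁ := le_max_left _ _
  have hk₁ε' : 1 ≤ ε₁ * k₁ := by
    rw [div_le_iff₀ hε₁] at hk₁ε
    linarith [hk₁ε]
  have hNk₁ : N / k₁ ≤ ε₁ * N := by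
    rw [div_le_iff₀ hk₁]
    nlinarith
  have hfx : fx > φ₁ * N - N / k₁ := by linarith
  have hfirst : fx > (φ₁ - ε₁) * N := by nlinarith
  refine ⟨hfirst, ?_⟩
  have hγβ : γ = β * (ε₂ + φ₂) := by
    simp only [γ, β]
    field_simp
  have hβinv : β * (ε₂ * φ₁) = 1 := by
    simp only [β]
    field_simp
  have hid : N / k₂ = ε₂ * φ₁ * N - (ε₂ + φ₂) * (N / k₁) := by
    have hk₁ne : k₁ ≠ 0 := ne_of_gt hk₁
    have hkγ : k₁ - (ε₂ + φ₂) / (ε₂ * φ₁) ≠ 0 := sub_ne_zero.mpr (ne_of_gt hk₁γ)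
    rw [show (k₂ : ℝ) = (1 / (ε₂ * φ₁)) * k₁ / (k₁ - (ε₂ + φ₂) / (ε₂ * φ₁)) from rfl]
    field_simp
  have h7 : φ₂ * (fx - N / k₁) ≤ φ₂ * (fxhat - N / k₁) := by nlinarith
  have h8 : ε₂ * (φ₁ * N - N / k₁) < ε₂ * fx := by nlinarith
  linarith [h3, h4, h6, h7, h8, hid]
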